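/- A morphism f : X → Y of simplicial sets is a trivial relative n-dimensional hypergroupoid if and only if the canonical map X → Y ×_{cosk_{n-1}Y} cosk_{n-1}X is an isomorphism and the (n-1)-truncation of f satisfies the surjectivity conditions up to level n-1. -/

import Mathlib

open CategoryTheory Simplicial CategoryTheory.Limits

def RelTarget {X Y A B : SSet} (f : X ⟶ Y) (i : A ⟶ B) : Type _ :=
  {p : (A ⟶ X) × (B ⟶ Y) // p.1 ≫ f = i ≫ p.2}

def relMatch {X Y A B : SSet} (f : X ⟶ Y) (i : A ⟶ B) (g : B ⟶ X) : RelTarget f i :=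
  ⟨(i ≫ g, g ≫ f), Category.assoc i g f⟩

/-- A trivial relative `n`-dimensional hypergroupoid: a trivial Kan fibration whose
relative matching maps are bijective in all levels `m ≥ n`. -/
def IsTrivRelHypergroupoid (n : ℕ) {X Y : SSet} (f : X ⟶ Y) : Prop :=
  (∀ m : ℕ, Function.Surjective (relMatch f ((SSet.boundary m).ι))) ∧
    ∀ m : ℕ, m ≥ n → Function.Bijective (relMatch f ((SSet.boundary m).ι))

universe u

set_option synthInstance.maxHeartbeats 400000 in
/-- The canonical morphism `X ⟶ Y ×_{cosk_r Y} cosk_r X` induced by `f` and the unit of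
the truncation–coskeleton adjunction. -/
noncomputable def toCoskPullback (r : ℕ) {X Y : SSet.{u}} (f : X ⟶ Y) :
    X ⟶ pullback ((SimplicialObject.cosk r).map f)
      ((SimplicialObject.coskAdj r).unit.app Y) :=
  pullback.lift ((SimplicialObject.coskAdj r).unit.app X) f
    ((SimplicialObject.coskAdj r).unit.naturality f).symm

namespace Stmt5Aux
open SimplexCategory SSet Opposite

local notation "std" => SSet.stdSimplex

abbrev el {a b : SimplexCategory} (τ : b ⟶ a) : ((std).obj a).obj (op b) := ULift.up τ

lemma hom_nat {Z : SSet} {a b c : SimplexCategory} (g : (std).obj a ⟶ Z) (γ : c ⟶ b)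
    (τ : b ⟶ a) : g.app (op c) (el (γ ≫ τ)) = Z.map γ.op (g.app (op b) (el τ)) :=
  NatTrans.naturality_apply g γ.op (el τ)

lemma yE_apply {Z : SSet} {a : SimplexCategory} (g : (std).obj a ⟶ Z) :
    SSet.yonedaEquiv (X := Z) (n := a) g = g.app (op a) (el (𝟙 a)) := rfl

lemma app_el {Z : SSet} {a b : SimplexCategory} (g : (std).obj a ⟶ Z) (τ : b ⟶ a) :
    g.app (op b) (el τ) = Z.map τ.op (SSet.yonedaEquiv (X := Z) (n := a) g) := by
  have := hom_nat g τ (𝟙 a)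
  rw [Category.comp_id] at this
  exact this

lemma yE_precomp {Z : SSet} {a b : SimplexCategory} (g : (std).obj a ⟶ Z) (γ : b ⟶ a) :
    SSet.yonedaEquiv (X := Z) (n := b) ((std).map γ ≫ g) = Z.map γ.op (SSet.yonedaEquiv (X := Z) (n := a) g) := by
  rw [yE_apply]
  show g.app (op b) (((std).map γ).app (op b) (el (𝟙 b))) = _
  have h1 : ((std).map γ).app (op b) (el (𝟙 b)) = el γ := by
    show el (𝟙 b ≫ γ) = el γ
    rw [Category.id_comp]
  rw [h1, app_el]

lemma yE_postcomp {Z W : SSet} {a : SimplexCategory} (g : (std).obj a ⟶ Z) (φ : Z ⟶ W) :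
    SSet.yonedaEquiv (X := W) (n := a) (g ≫ φ) = φ.app (op a) (SSet.yonedaEquiv (X := Z) (n := a) g) := rfl

variable (n : ℕ) {X Y : SSet} (f : X ⟶ Y)

def QQ (a : SimplexCategory) : Type _ :=
  {p : (((SSet.truncation n).obj ((std).obj a)) ⟶ (SSet.truncation n).obj X) ×
      ((std).obj a ⟶ Y) //
    p.1 ≫ (SSet.truncation n).map f = (SSet.truncation n).map p.2}

def psi (a : SimplexCategory) (g : (std).obj a ⟶ X) : QQ n f a :=
  ⟨⟨(SSet.truncation n).map g, g ≫ f⟩, by rw [← Functor.map_comp]⟩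


def unHom {n : ℕ} {b a : SimplexCategory.Truncated n} (τ : b ⟶ a) : b.obj ⟶ a.obj := τ.hom

def trHom {b a : SimplexCategory} (hb : b.len ≤ n) (ha : a.len ≤ n) (τ : b ⟶ a) :
    (⟨b, hb⟩ : SimplexCategory.Truncated n) ⟶ ⟨a, ha⟩ :=
  ObjectProperty.homMk τ

lemma bij_psi_low (a : SimplexCategory) (ha : a.len ≤ n) :
    Function.Bijective (psi n f a) := by
  constructor
  · intro g g' h
    have h1 : (SSet.truncation n).map g = (SSet.truncation n).map g' :=
      congrArg (fun q => q.1.1) h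
    apply (SSet.yonedaEquiv (X := X) (n := a)).injective
    rw [yE_apply, yE_apply]
    exact types_congr_hom (congrArg (fun (q : (SSet.truncation n).obj ((std).obj a) ⟶
      (SSet.truncation n).obj X) => q.app (op ⟨a, ha⟩)) h1) (el (𝟙 a))
  · rintro ⟨⟨xb, y⟩, hc⟩
    set x : X.obj (op a) := xb.app (op ⟨a, ha⟩) (el (𝟙 a)) with hx
    refine ⟨(SSet.yonedaEquiv (X := X) (n := a)).symm x, ?_⟩
    have hyE : SSet.yonedaEquiv (X := X) (n := a) ((SSet.yonedaEquiv (X := X) (n := a)).symm x) = x :=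
      (SSet.yonedaEquiv (X := X) (n := a)).apply_symm_apply x
    apply Subtype.ext
    dsimp [psi]
    refine Prod.ext ?_ ?_
    · apply NatTrans.ext
      funext bop
      refine ConcreteCategory.hom_ext _ _ fun α => ?_
      obtain ⟨⟨b, hb⟩⟩ := bop
      obtain ⟨τ⟩ := α
      show ((SSet.yonedaEquiv (X := X) (n := a)).symm x).app (op b) (el τ) = xb.app (op ⟨b, hb⟩) (el τ)
      rw [app_el, hyE]
      -- naturality of xb along τ viewed as a truncated morphism
      have := NatTrans.naturality_apply xb (trHom n hb ha τ).op (el (𝟙 a))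
      have harg : ((SSet.truncation n).obj ((std).obj a)).map
          (trHom n hb ha τ).op (el (𝟙 a)) = el τ := by
        show el (τ ≫ 𝟙 a) = el τ
        rw [Category.comp_id]
      rw [harg] at this
      rw [this]
      rfl
    · apply (SSet.yonedaEquiv (X := Y) (n := a)).injective
      have h2 := types_congr_hom (congrArg (fun (q : (SSet.truncation n).obj ((std).obj a) ⟶
        (SSet.truncation n).obj Y) => q.app (op ⟨a, ha⟩)) hc) (el (𝟙 a))
      show SSet.yonedaEquiv (X := Y) (n := a) ((SSet.yonedaEquiv (X := X) (n := a)).symm x ≫ f) = SSet.yonedaEquiv (X := Y) (n := a) y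
      rw [yE_apply, yE_apply]
      show f.app (op a) (((SSet.yonedaEquiv (X := X) (n := a)).symm x).app (op a) (el (𝟙 a))) = _
      have : ((SSet.yonedaEquiv (X := X) (n := a)).symm x).app (op a) (el (𝟙 a)) = x := hyE
      rw [this]
      exact h2

lemma not_surj_of_lt {b : SimplexCategory} {m : ℕ} (τ : b ⟶ ⦋m⦌) (h : b.len < m) :
    ¬Function.Surjective τ.toOrderHom := by
  intro hs
  have := Fintype.card_le_of_surjective _ hs
  simp only [Fintype.card_fin, len_mk] at this
  omega

lemma ns_comp {b c : SimplexCategory} {m : ℕ} {τ : b ⟶ ⦋m⦌} (hτ : ¬Function.Surjective τ.toOrderHom)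
    (γ : c ⟶ b) : ¬Function.Surjective (γ ≫ τ).toOrderHom := by
  intro h
  exact hτ (Function.Surjective.of_comp (g := γ.toOrderHom) h)

/-- element of the boundary -/
abbrev bel {b : SimplexCategory} {m : ℕ} (τ : b ⟶ ⦋m⦌) (hτ : ¬Function.Surjective τ.toOrderHom) :
    ((SSet.boundary (m)).toSSet).obj (op b) := ⟨el τ, hτ⟩

lemma bel_map {b c : SimplexCategory} {m : ℕ} (τ : b ⟶ ⦋m⦌)
    (hτ : ¬Function.Surjective τ.toOrderHom) (γ : c ⟶ b) :
    ((SSet.boundary (m)).toSSet).map γ.op (bel τ hτ) = bel (γ ≫ τ) (ns_comp hτ γ) := rfl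

/-- restriction of a map on the boundary to the `n`-truncation -/
def trB {m : ℕ} (hm : n < m) (u : (SSet.boundary (m)).toSSet ⟶ X) :
    (SSet.truncation n).obj Δ[m] ⟶ (SSet.truncation n).obj X where
  app bh := TypeCat.ofHom fun α =>
    u.app (op bh.unop.obj) ⟨α, not_surj_of_lt α.down (lt_of_le_of_lt bh.unop.property hm)⟩
  naturality bh ch φ := by
    refine ConcreteCategory.hom_ext _ _ fun α => ?_
    exact NatTrans.naturality_apply u (unHom φ.unop).op
      ⟨α, not_surj_of_lt α.down (lt_of_le_of_lt bh.unop.property hm)⟩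

def relRestrict {m : ℕ} (hm : n < m) :
    RelTarget f ((SSet.boundary m).ι) → QQ n f ⦋m⦌ := fun p =>
  ⟨⟨trB n hm p.1.1, p.1.2⟩, by
    apply NatTrans.ext
    funext bh
    refine ConcreteCategory.hom_ext _ _ fun α => ?_
    exact types_congr_hom (congrArg (fun (q : (SSet.boundary (m)).toSSet ⟶ Y) => q.app (op bh.unop.obj)) p.2)
      ⟨α, not_surj_of_lt α.down (lt_of_le_of_lt bh.unop.property hm)⟩⟩

lemma relRestrict_relMatch {m : ℕ} (hm : n < m) (g : Δ[m] ⟶ X) :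
    relRestrict n f hm (relMatch f ((SSet.boundary m).ι) g) = psi n f ⦋m⦌ g := rfl

lemma surj_of_mono_of_len_eq {c d : SimplexCategory} (μ : c ⟶ d) [Mono μ]
    (h : c.len = d.len) : Function.Surjective μ.toOrderHom := by
  have hinj : Function.Injective μ.toOrderHom := mono_iff_injective.1 ‹_›
  have : Function.Bijective μ.toOrderHom := by
    rw [Fintype.bijective_iff_injective_and_card]
    exact ⟨hinj, by simp [h]⟩
  exact this.2

lemma toOrderHom_comp_apply {a b c : SimplexCategory} (g : a ⟶ b) (h : b ⟶ c)
    (x : Fin (a.len + 1)) : (g ≫ h).toOrderHom x = h.toOrderHom (g.toOrderHom x) := rfl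

lemma image_len_le {b : SimplexCategory} {m : ℕ} (σ : b ⟶ ⦋m + 1⦌)
    (hσ : ¬Function.Surjective σ.toOrderHom) : (image σ).len ≤ m := by
  by_contra hgt
  push_neg at hgt
  have h1 : (image σ).len ≤ m + 1 := by
    simpa using len_le_of_mono (image.ι σ)
  have he : (image σ).len = m + 1 := le_antisymm h1 hgt
  have hι : Function.Surjective (image.ι σ).toOrderHom :=
    surj_of_mono_of_len_eq _ (by simp [he])
  have hfe : Function.Surjective (factorThruImage σ).toOrderHom :=
    epi_iff_surjective.1 inferInstance
  apply hσ
  intro z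
  obtain ⟨w, hw⟩ := hι z
  obtain ⟨v, hv⟩ := hfe w
  refine ⟨v, ?_⟩
  conv_lhs => rw [← image.fac σ]
  rw [toOrderHom_comp_apply, hv, hw]

section Filler

variable {n} {f}
variable {m' : ℕ} (H : ∀ a : SimplexCategory, a.len ≤ m' → Function.Bijective (psi n f a))
variable (q : QQ n f ⦋m' + 1⦌)

noncomputable def G {a : SimplexCategory} (ha : a.len ≤ m') (τ : a ⟶ ⦋m' + 1⦌) : (std).obj a ⟶ X :=
  (Equiv.ofBijective _ (H a ha)).symm
    ⟨⟨(SSet.truncation n).map ((std).map τ) ≫ q.1.1, (std).map τ ≫ q.1.2⟩, by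
      rw [Category.assoc, q.2, ← Functor.map_comp]⟩

lemma psi_G {a : SimplexCategory} (ha : a.len ≤ m') (τ : a ⟶ ⦋m' + 1⦌) :
    psi n f a (G H q ha τ) =
      ⟨⟨(SSet.truncation n).map ((std).map τ) ≫ q.1.1, (std).map τ ≫ q.1.2⟩, by
        rw [Category.assoc, q.2, ← Functor.map_comp]⟩ :=
  (Equiv.ofBijective _ (H a ha)).apply_symm_apply _

lemma G_tr {a : SimplexCategory} (ha : a.len ≤ m') (τ : a ⟶ ⦋m' + 1⦌) :
    (SSet.truncation n).map (G H q ha τ) = (SSet.truncation n).map ((std).map τ) ≫ q.1.1 :=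
  congrArg (fun r => r.1.1) (psi_G H q ha τ)

lemma G_f {a : SimplexCategory} (ha : a.len ≤ m') (τ : a ⟶ ⦋m' + 1⦌) :
    G H q ha τ ≫ f = (std).map τ ≫ q.1.2 :=
  congrArg (fun r => r.1.2) (psi_G H q ha τ)

lemma G_comp {a b : SimplexCategory} (ha : a.len ≤ m') (hb : b.len ≤ m')
    (τ : a ⟶ ⦋m' + 1⦌) (γ : b ⟶ a) :
    (std).map γ ≫ G H q ha τ = G H q hb (γ ≫ τ) := by
  apply (H b hb).1
  rw [psi_G H q hb (γ ≫ τ)]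
  apply Subtype.ext
  refine Prod.ext ?_ ?_
  · show (SSet.truncation n).map ((std).map γ ≫ G H q ha τ) =
      (SSet.truncation n).map ((std).map (γ ≫ τ)) ≫ q.1.1
    rw [Functor.map_comp, G_tr H q ha τ, ← Category.assoc, ← Functor.map_comp]
    erw [← Functor.map_comp]
  · show ((std).map γ ≫ G H q ha τ) ≫ f = (std).map (γ ≫ τ) ≫ q.1.2
    rw [Category.assoc, G_f H q ha τ, ← Category.assoc]
    erw [← Functor.map_comp]

lemma key_nat {b c : SimplexCategory} (σm : b ⟶ ⦋m' + 1⦌)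
    (hσ : ¬Function.Surjective σm.toOrderHom) (γ : c ⟶ b) :
    X.map γ.op (X.map (factorThruImage σm).op
      (SSet.yonedaEquiv (X := X) (n := _) (G H q (image_len_le σm hσ) (image.ι σm)))) =
    X.map (factorThruImage (γ ≫ σm)).op
      (SSet.yonedaEquiv (X := X) (n := _)
        (G H q (image_len_le (γ ≫ σm) (ns_comp hσ γ)) (image.ι (γ ≫ σm)))) := by
  have hlen := image_len_le σm hσ
  have fac2 : factorThruImage (γ ≫ factorThruImage σm) ≫ image.ι (γ ≫ factorThruImage σm) =
      γ ≫ factorThruImage σm := image.fac _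
  have hνlen : (image (γ ≫ factorThruImage σm)).len ≤ m' :=
    le_trans (len_le_of_mono (image.ι (γ ≫ factorThruImage σm))) hlen
  have fac3 : factorThruImage (γ ≫ factorThruImage σm) ≫
      (image.ι (γ ≫ factorThruImage σm) ≫ image.ι σm) = γ ≫ σm := by
    rw [← Category.assoc, fac2, Category.assoc, image.fac]
  haveI : Mono (image.ι (γ ≫ factorThruImage σm) ≫ image.ι σm) := mono_comp _ _
  have E : image (γ ≫ σm) = image (γ ≫ factorThruImage σm) := image_eq fac3
  have fac4 : (factorThruImage (γ ≫ factorThruImage σm) ≫ eqToHom E.symm) ≫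
      (eqToHom E ≫ image.ι (γ ≫ factorThruImage σm) ≫ image.ι σm) = γ ≫ σm := by
    simpa using fac3
  have hι' : image.ι (γ ≫ σm) = eqToHom E ≫ image.ι (γ ≫ factorThruImage σm) ≫ image.ι σm :=
    image_ι_eq fac4
  have he' : factorThruImage (γ ≫ σm) = factorThruImage (γ ≫ factorThruImage σm) ≫
      eqToHom E.symm := factorThruImage_eq fac4
  have hEl : (image (γ ≫ σm)).len ≤ m' := by rw [E]; exact hνlen
  have lhs_eq : X.map γ.op (X.map (factorThruImage σm).op
      (SSet.yonedaEquiv (X := X) (n := _) (G H q hlen (image.ι σm)))) =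
      X.map (factorThruImage (γ ≫ factorThruImage σm)).op
        (SSet.yonedaEquiv (X := X) (n := _) (G H q hνlen
          (image.ι (γ ≫ factorThruImage σm) ≫ image.ι σm))) := by
    conv_lhs => rw [← FunctorToTypes.map_comp_apply, ← op_comp]
    conv_rhs => rw [← G_comp H q hlen hνlen, yE_precomp,
      ← FunctorToTypes.map_comp_apply, ← op_comp, fac2]
  have rhs_eq : X.map (factorThruImage (γ ≫ σm)).op
      (SSet.yonedaEquiv (X := X) (n := _)
        (G H q (image_len_le (γ ≫ σm) (ns_comp hσ γ)) (image.ι (γ ≫ σm)))) =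
      X.map (factorThruImage (γ ≫ factorThruImage σm)).op
        (SSet.yonedaEquiv (X := X) (n := _) (G H q hνlen
          (image.ι (γ ≫ factorThruImage σm) ≫ image.ι σm))) := by
    rw [hι', he', op_comp, FunctorToTypes.map_comp_apply, ← yE_precomp,
      G_comp H q hEl hνlen]
    have h5 : eqToHom E.symm ≫ eqToHom E ≫ image.ι (γ ≫ factorThruImage σm) ≫ image.ι σm =
        image.ι (γ ≫ factorThruImage σm) ≫ image.ι σm := by simp
    rw [h5]
  rw [lhs_eq, rhs_eq]

noncomputable def uext : (SSet.boundary (m' + 1)).toSSet ⟶ X where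
  app bh := TypeCat.ofHom fun (s : ((SSet.boundary (m' + 1)).toSSet).obj bh) => X.map (factorThruImage s.1.down).op
    (SSet.yonedaEquiv (X := X) (n := _) (G H q (image_len_le s.1.down s.2) (image.ι s.1.down)))
  naturality bh ch φ := by
    refine ConcreteCategory.hom_ext _ _ fun s => ?_
    exact (key_nat H q s.1.down s.2 φ.unop).symm

lemma uext_app_small {b : SimplexCategory} (hb : b.len ≤ m') (σm : b ⟶ ⦋m' + 1⦌)
    (hσ : ¬Function.Surjective σm.toOrderHom) :
    (uext H q).app (op b) (bel σm hσ) = SSet.yonedaEquiv (X := X) (n := b) (G H q hb σm) := by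
  show X.map (factorThruImage σm).op
    (SSet.yonedaEquiv (X := X) (n := _) (G H q (image_len_le σm hσ) (image.ι σm))) = _
  conv_rhs => rw [← image.fac σm, ← G_comp H q (image_len_le σm hσ) hb, yE_precomp]

lemma uext_comp_f : uext H q ≫ f = (SSet.boundary (m' + 1)).ι ≫ q.1.2 := by
  apply NatTrans.ext
  funext bh
  refine ConcreteCategory.hom_ext _ _ fun s => ?_
  obtain ⟨⟨σm⟩, hσ⟩ := s
  show f.app bh (X.map (factorThruImage σm).op
    (SSet.yonedaEquiv (X := X) (n := _) (G H q (image_len_le σm hσ) (image.ι σm)))) =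
    q.1.2.app bh (el σm)
  have h1 : f.app bh (X.map (factorThruImage σm).op
      (SSet.yonedaEquiv (X := X) (n := _) (G H q (image_len_le σm hσ) (image.ι σm)))) =
      Y.map (factorThruImage σm).op (f.app (op (image σm))
        (SSet.yonedaEquiv (X := X) (n := _) (G H q (image_len_le σm hσ) (image.ι σm)))) :=
    NatTrans.naturality_apply f (factorThruImage σm).op
      (SSet.yonedaEquiv (X := X) (n := _) (G H q (image_len_le σm hσ) (image.ι σm)))
  rw [h1]
  have h2 : f.app (op (image σm)) (SSet.yonedaEquiv (X := X) (n := _)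
      (G H q (image_len_le σm hσ) (image.ι σm))) =
      SSet.yonedaEquiv (X := Y) (n := _) (G H q (image_len_le σm hσ) (image.ι σm) ≫ f) :=
    (yE_postcomp _ _).symm
  rw [h2, G_f H q, yE_precomp, ← FunctorToTypes.map_comp_apply, ← op_comp, image.fac,
    app_el]

variable (hn : n ≤ m')

lemma trB_uext : trB n (Nat.lt_succ_of_le hn) (uext H q) = q.1.1 := by
  apply NatTrans.ext
  funext bh
  refine ConcreteCategory.hom_ext _ _ fun α => ?_
  obtain ⟨⟨b, hb⟩⟩ := bh
  obtain ⟨τ⟩ := α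
  show (uext H q).app (op b) ⟨el τ, _⟩ = q.1.1.app (op ⟨b, hb⟩) (el τ)
  have hb' : b.len ≤ m' := le_trans hb hn
  have h1 : (uext H q).app (op b) (bel τ (not_surj_of_lt τ
      (lt_of_le_of_lt hb (Nat.lt_succ_of_le hn)))) = SSet.yonedaEquiv (X := X) (n := b) (G H q hb' τ) :=
    uext_app_small H q hb' τ _
  rw [h1]
  have h2 := types_congr_hom (congrArg (fun (r : (SSet.truncation n).obj ((std).obj b) ⟶
    (SSet.truncation n).obj X) => r.app (op ⟨b, hb⟩)) (G_tr H q hb' τ)) (el (𝟙 b))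
  dsimp at h2
  have h3 : ((std).map τ).app (op b) (el (𝟙 b)) = el τ := by
    show el (𝟙 b ≫ τ) = el τ
    rw [Category.id_comp]
  rw [yE_apply]
  have h2' : (G H q hb' τ).app (op b) (el (𝟙 b)) =
      q.1.1.app (op ⟨b, hb⟩) (((std).map τ).app (op b) (el (𝟙 b))) := h2
  rw [h2', h3]

/-- The `n`-truncation of the yoneda-preimage of a boundary simplex. -/
lemma restr_tr (u : (SSet.boundary (m' + 1)).toSSet ⟶ X) {b : SimplexCategory} (τ : b ⟶ ⦋m' + 1⦌)
    (hτ : ¬Function.Surjective τ.toOrderHom) :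
    (SSet.truncation n).map ((SSet.yonedaEquiv (X := X) (n := b)).symm (u.app (op b) (bel τ hτ))) =
      (SSet.truncation n).map ((std).map τ) ≫ trB n (Nat.lt_succ_of_le hn) u := by
  apply NatTrans.ext
  funext ch
  refine ConcreteCategory.hom_ext _ _ fun α => ?_
  obtain ⟨⟨c, hc⟩⟩ := ch
  obtain ⟨ρ⟩ := α
  show ((SSet.yonedaEquiv (X := X) (n := b)).symm (u.app (op b) (bel τ hτ))).app (op c) (el ρ) =
    (trB n (Nat.lt_succ_of_le hn) u).app (op ⟨c, hc⟩) (((std).map τ).app (op c) (el ρ))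
  rw [app_el, (SSet.yonedaEquiv (X := X) (n := b)).apply_symm_apply]
  have h1 : X.map ρ.op (u.app (op b) (bel τ hτ)) =
      u.app (op c) (((SSet.boundary (m' + 1)).toSSet).map ρ.op (bel τ hτ)) :=
    (NatTrans.naturality_apply u ρ.op (bel τ hτ)).symm
  rw [h1]
  rfl

lemma restr_f {u : (SSet.boundary (m' + 1)).toSSet ⟶ X} {y : Δ[m' + 1] ⟶ Y}
    (hp : u ≫ f = (SSet.boundary (m' + 1)).ι ≫ y) {b : SimplexCategory} (τ : b ⟶ ⦋m' + 1⦌)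
    (hτ : ¬Function.Surjective τ.toOrderHom) :
    (SSet.yonedaEquiv (X := X) (n := b)).symm (u.app (op b) (bel τ hτ)) ≫ f = (std).map τ ≫ y := by
  apply (SSet.yonedaEquiv (X := Y) (n := b)).injective
  rw [yE_postcomp, (SSet.yonedaEquiv (X := X) (n := b)).apply_symm_apply, yE_precomp]
  have h1 : f.app (op b) (u.app (op b) (bel τ hτ)) = y.app (op b) (el τ) :=
    types_congr_hom (congrArg (fun (r : (SSet.boundary (m' + 1)).toSSet ⟶ Y) => r.app (op b)) hp) (bel τ hτ)
  rw [h1, app_el]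

include H in
lemma bij_relRestrict : Function.Bijective (relRestrict n f (Nat.lt_succ_of_le hn)) := by
  constructor
  · rintro ⟨⟨u, y⟩, hp⟩ ⟨⟨u', y'⟩, hp'⟩ h
    have htr : trB n (Nat.lt_succ_of_le hn) u = trB n (Nat.lt_succ_of_le hn) u' :=
      congrArg (fun r => r.1.1) h
    have hy : y = y' := congrArg (fun r => r.1.2) h
    apply Subtype.ext
    dsimp
    refine Prod.ext ?_ hy
    -- u = u'
    have hface : ∀ (i : Fin (m' + 2)),
        u.app (op ⦋m'⦌) (bel (δ i) (not_surj_of_lt _ (by simp))) =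
        u'.app (op ⦋m'⦌) (bel (δ i) (not_surj_of_lt _ (by simp))) := by
      intro i
      have hm'le : SimplexCategory.len ⦋m'⦌ ≤ m' := by simp
      have hg : (SSet.yonedaEquiv (X := X) (n := ⦋m'⦌)).symm
          (u.app (op ⦋m'⦌) (bel (δ i) (not_surj_of_lt _ (by simp)))) =
          (SSet.yonedaEquiv (X := X) (n := ⦋m'⦌)).symm
          (u'.app (op ⦋m'⦌) (bel (δ i) (not_surj_of_lt _ (by simp)))) := by
        apply (H ⦋m'⦌ hm'le).1
        apply Subtype.ext
        refine Prod.ext ?_ ?_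
        · show (SSet.truncation n).map _ = (SSet.truncation n).map _
          rw [restr_tr hn u (δ i), restr_tr hn u' (δ i), htr]
        · show _ ≫ f = _ ≫ f
          rw [restr_f hp (δ i), restr_f hp' (δ i), hy]
      have := congrArg (SSet.yonedaEquiv (X := X) (n := ⦋m'⦌)) hg
      rwa [(SSet.yonedaEquiv (X := X) (n := ⦋m'⦌)).apply_symm_apply,
        (SSet.yonedaEquiv (X := X) (n := ⦋m'⦌)).apply_symm_apply] at this
    apply NatTrans.ext
    funext bh
    refine ConcreteCategory.hom_ext _ _ fun s => ?_
    obtain ⟨⟨σm⟩, hσ⟩ := s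
    obtain ⟨i, β, hfac⟩ := eq_comp_δ_of_not_surjective σm hσ
    have h1 : (bel σm hσ : ((SSet.boundary (m' + 1)).toSSet).obj (op bh.unop)) =
        ((SSet.boundary (m' + 1)).toSSet).map β.op (bel (δ i) (not_surj_of_lt _ (by simp))) := by
      apply Subtype.ext
      show el σm = el (β ≫ δ i)
      rw [hfac]
    have h2 : u.app (op bh.unop) (((SSet.boundary (m' + 1)).toSSet).map β.op (bel (δ i)
        (not_surj_of_lt _ (by simp)))) = X.map β.op (u.app (op ⦋m'⦌) (bel (δ i)
        (not_surj_of_lt _ (by simp)))) := NatTrans.naturality_apply u β.op _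
    have h2' : u'.app (op bh.unop) (((SSet.boundary (m' + 1)).toSSet).map β.op (bel (δ i)
        (not_surj_of_lt _ (by simp)))) = X.map β.op (u'.app (op ⦋m'⦌) (bel (δ i)
        (not_surj_of_lt _ (by simp)))) := NatTrans.naturality_apply u' β.op _
    show u.app (op bh.unop) (bel σm hσ) = u'.app (op bh.unop) (bel σm hσ)
    rw [h1, h2, h2', hface i]
  · intro q
    refine ⟨⟨⟨uext H q, q.1.2⟩, uext_comp_f H q⟩, ?_⟩
    apply Subtype.ext
    refine Prod.ext ?_ rfl
    exact trB_uext H q hn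

end Filler

section PartA

variable (n : ℕ) {X Y : SSet.{u}} (f : X ⟶ Y)

/-- translation of the unit along the hom-equivalence -/
lemma homEquiv_symm_unit {A : SSet} (b : A ⟶ Y) :
    ((SimplicialObject.coskAdj n).homEquiv A ((SSet.truncation n).obj Y)).symm
      (b ≫ (SimplicialObject.coskAdj n).unit.app Y) = (SSet.truncation n).map b := by
  rw [Adjunction.homEquiv_counit, Functor.map_comp, Category.assoc]
  rw [(SimplicialObject.coskAdj n).left_triangle_components Y, Category.comp_id]

lemma cond_iff {A : SSet} (a' : A ⟶ (SimplicialObject.cosk n).obj X) (b : A ⟶ Y) :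
    (a' ≫ (SimplicialObject.cosk n).map f = b ≫ (SimplicialObject.coskAdj n).unit.app Y) ↔
      ((SimplicialObject.coskAdj n).homEquiv A ((SSet.truncation n).obj X)).symm a' ≫
          (SSet.truncation n).map f = (SSet.truncation n).map b := by
  constructor
  · intro h
    have h1 := congrArg
      ((SimplicialObject.coskAdj n).homEquiv A ((SSet.truncation n).obj Y)).symm h
    rw [homEquiv_symm_unit] at h1
    rw [← h1]
    exact (Adjunction.homEquiv_naturality_right_symm _ _ _).symm
  · intro h
    apply ((SimplicialObject.coskAdj n).homEquiv A ((SSet.truncation n).obj Y)).symm.injective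
    rw [homEquiv_symm_unit,
      show (SimplicialObject.cosk n).map f =
        (SimplicialObject.Truncated.cosk n).map ((SSet.truncation n).map f) from rfl,
      Adjunction.homEquiv_naturality_right_symm]
    exact h

set_option synthInstance.maxHeartbeats 400000 in
noncomputable def pbEquiv (a : SimplexCategory) :
    (((std).obj a : SSet.{u}) ⟶ pullback ((SimplicialObject.cosk n).map f)
      ((SimplicialObject.coskAdj n).unit.app Y)) ≃ QQ n f a where
  toFun g := ⟨⟨((SimplicialObject.coskAdj n).homEquiv _ _).symm (g ≫ pullback.fst _ _),
      g ≫ pullback.snd _ _⟩,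
    (cond_iff n f _ _).1 (by rw [Category.assoc, Category.assoc, pullback.condition])⟩
  invFun p := pullback.lift ((SimplicialObject.coskAdj n).homEquiv _ _ p.1.1) p.1.2
    ((cond_iff n f _ _).2 (by rw [Equiv.symm_apply_apply]; exact p.2))
  left_inv g := by
    apply pullback.hom_ext
    · rw [pullback.lift_fst, Equiv.apply_symm_apply]
    · rw [pullback.lift_snd]
  right_inv p := by
    apply Subtype.ext
    refine Prod.ext ?_ ?_
    · show ((SimplicialObject.coskAdj n).homEquiv _ _).symm
        (pullback.lift _ _ _ ≫ pullback.fst _ _) = _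
      rw [pullback.lift_fst, Equiv.symm_apply_apply]
    · show pullback.lift _ _ _ ≫ pullback.snd _ _ = _
      rw [pullback.lift_snd]

set_option synthInstance.maxHeartbeats 400000 in
lemma pbEquiv_toCosk (a : SimplexCategory) (g : (std).obj a ⟶ X) :
    pbEquiv n f a (g ≫ toCoskPullback n f) = psi n f a g := by
  apply Subtype.ext
  refine Prod.ext ?_ ?_
  · show ((SimplicialObject.coskAdj n).homEquiv _ _).symm
      ((g ≫ toCoskPullback n f) ≫ pullback.fst _ _) = (psi n f a g).1.1
    simp only [pbEquiv, toCoskPullback, Equiv.coe_fn_mk, Category.assoc, pullback.lift_fst]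
    exact homEquiv_symm_unit n g
  · show (g ≫ toCoskPullback n f) ≫ pullback.snd _ _ = (psi n f a g).1.2
    simp only [pbEquiv, toCoskPullback, Equiv.coe_fn_mk, Category.assoc, pullback.lift_snd]
    rfl

end PartA

set_option synthInstance.maxHeartbeats 400000 in
lemma isIso_iff_bij_psi :
    IsIso (toCoskPullback n f) ↔ ∀ a : SimplexCategory, Function.Bijective (psi n f a) := by
  constructor
  · intro h a
    have hpost : Function.Bijective
        (fun g : (std).obj a ⟶ X => g ≫ toCoskPullback n f) := by
      constructor
      · intro g g' hg
        have := congrArg (fun t => t ≫ inv (toCoskPullback n f)) hg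
        simpa using this
      · intro h'
        exact ⟨h' ≫ inv (toCoskPullback n f), by simp⟩
    have hdec : psi n f a = (pbEquiv n f a) ∘
        (fun g => g ≫ toCoskPullback n f) :=
      funext fun g => (pbEquiv_toCosk n f a g).symm
    rw [hdec]
    exact (pbEquiv n f a).bijective.comp hpost
  · intro hb
    have happs : ∀ bh : SimplexCategoryᵒᵖ, IsIso ((toCoskPullback n f).app bh) := by
      intro bh
      rw [CategoryTheory.isIso_iff_bijective]
      have hcomp : Function.Bijective
          (fun g : (std).obj bh.unop ⟶ X => g ≫ toCoskPullback n f) := by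
        have hdec : (fun g : (std).obj bh.unop ⟶ X => g ≫ toCoskPullback n f) =
            (pbEquiv n f bh.unop).symm ∘ psi n f bh.unop := by
          funext g
          show g ≫ toCoskPullback n f = (pbEquiv n f bh.unop).symm (psi n f bh.unop g)
          rw [← pbEquiv_toCosk n f bh.unop g, Equiv.symm_apply_apply]
        rw [hdec]
        exact (pbEquiv n f bh.unop).symm.bijective.comp (hb bh.unop)
      have happ : (toCoskPullback n f).app bh =
          (SSet.yonedaEquiv (X := _) (n := bh.unop)) ∘ (fun g : (std).obj bh.unop ⟶ X =>
            g ≫ toCoskPullback n f) ∘ (SSet.yonedaEquiv (X := X) (n := bh.unop)).symm := by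
        funext x
        show (toCoskPullback n f).app bh x = SSet.yonedaEquiv (X := _) (n := bh.unop)
          ((SSet.yonedaEquiv (X := X) (n := bh.unop)).symm x ≫ toCoskPullback n f)
        rw [yE_postcomp]
        rw [(SSet.yonedaEquiv (X := X) (n := bh.unop)).apply_symm_apply]
      rw [happ]
      exact (SSet.yonedaEquiv (X := _) (n := bh.unop)).bijective.comp
        (hcomp.comp (SSet.yonedaEquiv (X := X) (n := bh.unop)).symm.bijective)
    exact NatIso.isIso_of_isIso_app _

lemma bij_psi_all
    (hb : ∀ m : ℕ, m ≥ n + 1 → Function.Bijective (relMatch f ((SSet.boundary m).ι))) :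
    ∀ a, Function.Bijective (psi n f a) := by
  suffices h : ∀ k (a : SimplexCategory), a.len ≤ k → Function.Bijective (psi n f a) from
    fun a => h a.len a le_rfl
  intro k
  induction k with
  | zero => exact fun a ha => bij_psi_low n f a (le_trans ha (Nat.zero_le n))
  | succ k ih =>
    intro a ha
    by_cases h1 : a.len ≤ k
    · exact ih a h1
    · have hlen : a.len = k + 1 := by omega
      by_cases h2 : k + 1 ≤ n
      · exact bij_psi_low n f a (by omega)
      · have hk : n ≤ k := by omega
        have hR := bij_relRestrict ih hk
        have hM := hb (k + 1) (by omega)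
        have hcomp : psi n f ⦋k + 1⦌ = relRestrict n f (Nat.lt_succ_of_le hk) ∘
            relMatch f ((SSet.boundary (k + 1)).ι) :=
          funext fun g => (relRestrict_relMatch n f _ g).symm
        have hbij : Function.Bijective (psi n f ⦋k + 1⦌) := by
          rw [hcomp]; exact hR.comp hM
        have ha' : a = SimplexCategory.mk (k + 1) := SimplexCategory.ext (by simp [hlen])
        rw [ha']
        exact hbij

lemma bij_relMatch_of (k : ℕ) (hk : n ≤ k)
    (hpsi : ∀ a : SimplexCategory, a.len ≤ k → Function.Bijective (psi n f a))
    (hpsiTop : Function.Bijective (psi n f ⦋k + 1⦌)) :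
    Function.Bijective (relMatch f ((SSet.boundary (k + 1)).ι)) := by
  have hR := bij_relRestrict hpsi hk
  constructor
  · intro g g' hg
    apply hpsiTop.1
    rw [← relRestrict_relMatch n f (Nat.lt_succ_of_le hk) g,
      ← relRestrict_relMatch n f (Nat.lt_succ_of_le hk) g', hg]
  · intro t
    obtain ⟨g, hg⟩ := hpsiTop.2 (relRestrict n f (Nat.lt_succ_of_le hk) t)
    refine ⟨g, hR.1 ?_⟩
    rw [relRestrict_relMatch n f _ g, hg]

end Stmt5Aux

/-- A morphism `f : X ⟶ Y` of simplicial sets is a trivial relative `(n+1)`-dimensional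
hypergroupoid if and only if the canonical map `X → Y ×_{cosk_n Y} cosk_n X` is an
isomorphism and the `n`-truncation of `f` satisfies the surjectivity conditions up to
level `n` (i.e. the relative matching maps are surjective in all levels `m ≤ n`). -/
theorem stmt5 (n : ℕ) {X Y : SSet} (f : X ⟶ Y) :
    IsTrivRelHypergroupoid (n + 1) f ↔
      (IsIso (toCoskPullback n f) ∧
        ∀ m : ℕ, m ≤ n → Function.Surjective (relMatch f ((SSet.boundary m).ι))) := by
  constructor
  · rintro ⟨hs, hbij⟩
    exact ⟨(Stmt5Aux.isIso_iff_bij_psi n f).2 (Stmt5Aux.bij_psi_all n f hbij),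
      fun m _ => hs m⟩
  · rintro ⟨hiso, hsurj⟩
    have hpsi : ∀ a, Function.Bijective (Stmt5Aux.psi n f a) :=
      (Stmt5Aux.isIso_iff_bij_psi n f).1 hiso
    have hBM : ∀ m : ℕ, m ≥ n + 1 →
        Function.Bijective (relMatch f ((SSet.boundary m).ι)) := by
      intro m hm
      obtain ⟨k, rfl⟩ : ∃ k, m = k + 1 := ⟨m - 1, by omega⟩
      exact Stmt5Aux.bij_relMatch_of n f k (by omega) (fun a _ => hpsi a)
        (hpsi (SimplexCategory.mk (k + 1)))
    refine ⟨?_, hBM⟩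
    intro m
    by_cases h : m ≤ n
    · exact hsurj m h
    · exact (hBM m (by omega)).2
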